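/- Let C be a nodal curve with marked smooth point σ(0), and fix irreducible components C_γ, C_{γ'}. If Z is a 2-tail of C with C_γ ∪ C_{γ'} ⊆ Z and σ(0) ∈ Z^c, then there exists a 2-tail W in the nested set T²_{γ,γ'} such that W ⊆ Z and Term_W ∩ Term_Z ≠ ∅ (W is Z-terminal). -/

import Mathlib

open Finset

/-- A combinatorial model of a nodal curve: `V` is the set of irreducible
components, `N` the set of nodes, `ends e` the (one or two) components through
the node `e`, `gen v` the geometric genus of the component `v`, and `base` the
component containing the marked smooth point `σ(0)`. -/
structure NodalGraph where
  V : Type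
  N : Type
  [fV : Fintype V]
  [dV : DecidableEq V]
  [fN : Fintype N]
  [dN : DecidableEq N]
  ends : N → V × V
  gen : V → ℕ
  base : V

attribute [instance] NodalGraph.fV NodalGraph.dV NodalGraph.fN NodalGraph.dN

namespace NodalGraph

variable (G : NodalGraph)

/-- Two components are adjacent if some node lies on both. -/
def Adj (a b : G.V) : Prop := ∃ e, G.ends e = (a, b) ∨ G.ends e = (b, a)

/-- The set of terminal points of a subcurve `Z`, i.e. the nodes in `Z ∩ Zᶜ`. -/
def Term (Z : Finset G.V) : Finset G.N :=
  univ.filter (fun e =>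
    ((G.ends e).1 ∈ Z ∧ (G.ends e).2 ∉ Z) ∨ ((G.ends e).1 ∉ Z ∧ (G.ends e).2 ∈ Z))

/-- `k_Z`, the number of terminal points of `Z`. -/
def k (Z : Finset G.V) : ℕ := (G.Term Z).card

/-- A (nonempty) subcurve is connected. -/
def ConnSub (Z : Finset G.V) : Prop :=
  Z.Nonempty ∧ ∀ u ∈ Z, ∀ v ∈ Z,
    Relation.ReflTransGen (fun a b => a ∈ Z ∧ b ∈ Z ∧ G.Adj a b) u v

/-- The whole curve is connected. -/
def Connected : Prop := G.ConnSub univ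

/-- A tail: a proper subcurve `Z` with both `Z` and `Zᶜ` connected. -/
def IsTail (Z : Finset G.V) : Prop := Z ≠ univ ∧ G.ConnSub Z ∧ G.ConnSub Zᶜ

/-- A `m`-tail: a tail with `k_Z = m`. -/
def IsKTail (Z : Finset G.V) (m : ℕ) : Prop := G.IsTail Z ∧ G.k Z = m

/-- The node `e` lies on the component `v`. -/
def onComp (e : G.N) (v : G.V) : Prop := (G.ends e).1 = v ∨ (G.ends e).2 = v

/-- The node `e`, as a point of the curve, lies on the subcurve `Z`. -/
def nodeOn (e : G.N) (Z : Finset G.V) : Prop := (G.ends e).1 ∈ Z ∨ (G.ends e).2 ∈ Z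

/-- The subcurve `Z` crosses the node `e`: both branches of `e` lie in `Z`. -/
def crosses (Z : Finset G.V) (e : G.N) : Prop := (G.ends e).1 ∈ Z ∧ (G.ends e).2 ∈ Z

/-- `Z ≺ Z'`: strict inclusion with disjoint terminal points. -/
def prec (Z Z' : Finset G.V) : Prop := Z ⊂ Z' ∧ G.Term Z ∩ G.Term Z' = ∅

/-- The pair `(Z, Z')` is free: disjoint terminal points. -/
def free (Z Z' : Finset G.V) : Prop := G.Term Z ∩ G.Term Z' = ∅

/-- The pair `(Z, Z')` is perfect. -/
def perfect (Z Z' : Finset G.V) : Prop := Z ⊆ Z' ∨ Z' ⊆ Z ∨ Zᶜ ⊆ Z' ∨ Z' ⊆ Zᶜ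

/-- `T¹_γ`: the nested set of 1-tails containing `C_γ` and avoiding `σ(0)`. -/
def T1 (γ : G.V) : Set (Finset G.V) := { Z | G.IsKTail Z 1 ∧ γ ∈ Z ∧ G.base ∉ Z }

/-- The defining condition for the 2-tails entering `T²_{γ,γ'}`. -/
def cond2 (γ γ' : G.V) (Z : Finset G.V) : Prop :=
  G.IsKTail Z 2 ∧ γ ∈ Z ∧ γ' ∈ Z ∧ G.base ∉ Z

/-- `W 0 ≺ W 1 ≺ ⋯ ≺ W (M-1)` is the nested set `T²_{γ,γ'}` of 2-tails:
each `W t` is minimal among the 2-tails `Z ⊇ C_γ ∪ C_γ'` with `σ(0) ∈ Zᶜ`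
and `W (t-1) ≺ Z` (starting from `W_{-1} = ∅`), and the chain is maximal. -/
def IsNested2 (γ γ' : G.V) (M : ℕ) (W : ℕ → Finset G.V) : Prop :=
  (∀ t < M, Minimal (fun Z => G.cond2 γ γ' Z ∧ G.prec (if t = 0 then ∅ else W (t - 1)) Z) (W t)) ∧
  ¬ ∃ Z, G.cond2 γ γ' Z ∧ G.prec (if M = 0 then ∅ else W (M - 1)) Z

/-- The set underlying a finite chain `W 0, …, W (M-1)`. -/
def chainSet (M : ℕ) (W : ℕ → Finset G.V) : Set (Finset G.V) := { Z | ∃ t < M, W t = Z }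

/-- The defining condition for the 3-tails entering `T³_{γ,γ'}`:
3-tails that are moreover free with respect to every member of `T²_{γ,γ'}`. -/
def cond3 (γ γ' : G.V) (T2 : Set (Finset G.V)) (Z : Finset G.V) : Prop :=
  G.IsKTail Z 3 ∧ γ ∈ Z ∧ γ' ∈ Z ∧ G.base ∉ Z ∧ ∀ W ∈ T2, G.free Z W

/-- `W 0 ≺ ⋯ ≺ W (M-1)` is the nested set `T³_{γ,γ'}` of 3-tails (relative to
the set `T2` of nested 2-tails). -/
def IsNested3 (γ γ' : G.V) (T2 : Set (Finset G.V)) (M : ℕ) (W : ℕ → Finset G.V) : Prop :=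
  (∀ t < M, Minimal (fun Z => G.cond3 γ γ' T2 Z ∧ G.prec (if t = 0 then ∅ else W (t - 1)) Z) (W t)) ∧
  ¬ ∃ Z, G.cond3 γ γ' T2 Z ∧ G.prec (if M = 0 then ∅ else W (M - 1)) Z

end NodalGraph

namespace NodalGraph

variable (G : NodalGraph)

private lemma adj_symm' {a b : G.V} (h : G.Adj a b) : G.Adj b a := by
  obtain ⟨e, he⟩ := h; exact ⟨e, he.symm⟩

private lemma mem_Term' {e : G.N} {Z : Finset G.V} :
    e ∈ G.Term Z ↔
      (((G.ends e).1 ∈ Z ∧ (G.ends e).2 ∉ Z) ∨ ((G.ends e).1 ∉ Z ∧ (G.ends e).2 ∈ Z)) := by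
  simp [Term]

private lemma cross_aux {α : Type*} (r : α → α → Prop) (P : α → Prop) :
    ∀ {u v : α}, Relation.ReflTransGen r u v → P u → ¬ P v → ∃ a b, P a ∧ ¬ P b ∧ r a b := by
  intro u v h
  induction h with
  | refl => exact fun hu hv => absurd hu hv
  | @tail b c hub hbc ih =>
    intro hu hc
    by_cases hb : P b
    · exact ⟨b, c, hb, hc, hbc⟩
    · exact ih hu hb

private lemma cross {S : Finset G.V} (h : G.ConnSub S) (P : G.V → Prop) {u v : G.V}
    (hu : u ∈ S) (hv : v ∈ S) (hPu : P u) (hPv : ¬ P v) :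
    ∃ a b, a ∈ S ∧ b ∈ S ∧ P a ∧ ¬ P b ∧ G.Adj a b := by
  obtain ⟨a, b, hPa, hPb, h1, h2, h3⟩ := cross_aux _ P (h.2 u hu v hv) hPu hPv
  exact ⟨a, b, h1, h2, hPa, hPb, h3⟩

private lemma term_of_adj {a b : G.V} {Z : Finset G.V} (h : G.Adj a b) (ha : a ∈ Z) (hb : b ∉ Z) :
    ∃ e, e ∈ G.Term Z ∧ (G.ends e = (a, b) ∨ G.ends e = (b, a)) := by
  obtain ⟨e, he⟩ := h
  refine ⟨e, ?_, he⟩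
  rw [G.mem_Term']
  rcases he with he | he <;> rw [he]
  · exact Or.inl ⟨ha, hb⟩
  · exact Or.inr ⟨hb, ha⟩

private lemma endpts {e : G.N} {a b : G.V} (h : G.ends e = (a, b) ∨ G.ends e = (b, a))
    (P : G.V → Prop) (ha : P a) (hb : P b) : P (G.ends e).1 ∧ P (G.ends e).2 := by
  rcases h with h | h
  · rw [h]; exact ⟨ha, hb⟩
  · rw [h]; exact ⟨hb, ha⟩

private lemma rtg_mono {S T : Finset G.V} (hST : S ⊆ T) {u v : G.V}
    (h : Relation.ReflTransGen (fun a b => a ∈ S ∧ b ∈ S ∧ G.Adj a b) u v) :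
    Relation.ReflTransGen (fun a b => a ∈ T ∧ b ∈ T ∧ G.Adj a b) u v :=
  Relation.ReflTransGen.mono (r := fun a b => a ∈ S ∧ b ∈ S ∧ G.Adj a b)
    (p := fun a b => a ∈ T ∧ b ∈ T ∧ G.Adj a b) (fun a b hab => ⟨hST hab.1, hST hab.2.1, hab.2.2⟩) u v h

private lemma connSub_union {S T : Finset G.V} (hS : G.ConnSub S) (hT : G.ConnSub T)
    {x : G.V} (hxS : x ∈ S) (hxT : x ∈ T) : G.ConnSub (S ∪ T) := by
  refine ⟨⟨x, mem_union_left _ hxS⟩, ?_⟩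
  have key : ∀ u ∈ S ∪ T,
      Relation.ReflTransGen (fun a b => a ∈ S ∪ T ∧ b ∈ S ∪ T ∧ G.Adj a b) u x := by
    intro u hu
    rcases mem_union.mp hu with h | h
    · exact G.rtg_mono subset_union_left (hS.2 u h x hxS)
    · exact G.rtg_mono subset_union_right (hT.2 u h x hxT)
  intro u hu v hv
  have hsymm : Symmetric (fun a b => a ∈ S ∪ T ∧ b ∈ S ∪ T ∧ G.Adj a b) :=
    fun a b hab => ⟨hab.2.1, hab.1, G.adj_symm' hab.2.2⟩
  exact (key u hu).trans (@Std.Symm.symm _ _ (@Relation.ReflTransGen.stdSymm _ _ ⟨fun _ _ h => hsymm h⟩) _ _ (key v hv))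

private lemma wedge (γ γ' : G.V) (prev Z₁ Z₂ : Finset G.V)
    (h₁ : G.cond2 γ γ' Z₁) (h₂ : G.cond2 γ γ' Z₂)
    (hp₁ : G.prec prev Z₁) (hp₂ : G.prec prev Z₂) :
    ∃ Y, (G.cond2 γ γ' Y ∧ G.prec prev Y) ∧ Y ⊆ Z₁ ∩ Z₂ := by
  by_cases h12 : Z₁ ⊆ Z₂
  · exact ⟨Z₁, ⟨h₁, hp₁⟩, subset_inter Subset.rfl h12⟩
  by_cases h21 : Z₂ ⊆ Z₁
  · exact ⟨Z₂, ⟨h₂, hp₂⟩, subset_inter h21 Subset.rfl⟩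
  have hc₁ := h₁.1.1.2.1
  have hcc₁ := h₁.1.1.2.2
  have hk₁ : (G.Term Z₁).card = 2 := h₁.1.2
  have hγ₁ := h₁.2.1
  have hγ'₁ := h₁.2.2.1
  have hb₁ : G.base ∉ Z₁ := h₁.2.2.2
  have hc₂ := h₂.1.1.2.1
  have hcc₂ := h₂.1.1.2.2
  have hk₂ : (G.Term Z₂).card = 2 := h₂.1.2
  have hγ₂ := h₂.2.1
  have hγ'₂ := h₂.2.2.1
  have hb₂ : G.base ∉ Z₂ := h₂.2.2.2
  obtain ⟨b₀, hb₀₁, hb₀₂⟩ := Finset.not_subset.mp h12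
  obtain ⟨c₀, hc₀₂, hc₀₁⟩ := Finset.not_subset.mp h21
  -- e₁ : an edge from Z₁ ∩ Z₂ to Z₂ \ Z₁, crossing ∂Z₁, inside Z₂
  obtain ⟨a₁, b₁v, ha₁S, hb₁S, ha₁P, hb₁P, hadj₁⟩ :=
    G.cross hc₂ (fun x => x ∈ Z₁) hγ₂ hc₀₂ hγ₁ hc₀₁
  obtain ⟨e₁, he₁, hends₁⟩ := G.term_of_adj hadj₁ ha₁P hb₁P
  have he₁Z₂ : (G.ends e₁).1 ∈ Z₂ ∧ (G.ends e₁).2 ∈ Z₂ := G.endpts hends₁ _ ha₁S hb₁S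
  -- e₂ : an edge crossing ∂Z₁ inside Z₂ᶜ
  obtain ⟨a₃, b₃, ha₃S, hb₃S, ha₃P, hb₃P, hadj₃⟩ :=
    G.cross hcc₂ (fun x => x ∈ Z₁) (Finset.mem_compl.mpr hb₀₂) (Finset.mem_compl.mpr hb₂)
      hb₀₁ hb₁
  obtain ⟨e₂, he₂, hends₂⟩ := G.term_of_adj hadj₃ ha₃P hb₃P
  have he₂Z₂ : (G.ends e₂).1 ∉ Z₂ ∧ (G.ends e₂).2 ∉ Z₂ :=
    G.endpts hends₂ (fun x => x ∉ Z₂) (Finset.mem_compl.mp ha₃S) (Finset.mem_compl.mp hb₃S)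
  -- f₁ : an edge crossing ∂Z₂ inside Z₁
  obtain ⟨a₂, b₂, ha₂S, hb₂S, ha₂P, hb₂P, hadj₂⟩ :=
    G.cross hc₁ (fun x => x ∈ Z₂) hγ₁ hb₀₁ hγ₂ hb₀₂
  obtain ⟨f₁, hf₁, hendsf₁⟩ := G.term_of_adj hadj₂ ha₂P hb₂P
  have hf₁Z₁ : (G.ends f₁).1 ∈ Z₁ ∧ (G.ends f₁).2 ∈ Z₁ := G.endpts hendsf₁ _ ha₂S hb₂S
  -- f₂ : an edge crossing ∂Z₂ inside Z₁ᶜ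
  obtain ⟨a₄, b₄, ha₄S, hb₄S, ha₄P, hb₄P, hadj₄⟩ :=
    G.cross hcc₁ (fun x => x ∈ Z₂) (Finset.mem_compl.mpr hc₀₁) (Finset.mem_compl.mpr hb₁)
      hc₀₂ hb₂
  obtain ⟨f₂, hf₂, hendsf₂⟩ := G.term_of_adj hadj₄ ha₄P hb₄P
  have hf₂Z₁ : (G.ends f₂).1 ∉ Z₁ ∧ (G.ends f₂).2 ∉ Z₁ :=
    G.endpts hendsf₂ (fun x => x ∉ Z₁) (Finset.mem_compl.mp ha₄S) (Finset.mem_compl.mp hb₄S)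
  have hne_e : e₁ ≠ e₂ := fun h => he₂Z₂.1 (h ▸ he₁Z₂.1)
  have hne_f : f₁ ≠ f₂ := fun h => hf₂Z₁.1 (h ▸ hf₁Z₁.1)
  have hT₁ : G.Term Z₁ = {e₁, e₂} := by
    refine (Finset.eq_of_subset_of_card_le ?_ ?_).symm
    · intro g hg
      rcases Finset.mem_insert.mp hg with h | h
      · rw [h]; exact he₁
      · rw [Finset.mem_singleton.mp h]; exact he₂
    · rw [hk₁, Finset.card_pair hne_e]
  have hT₂ : G.Term Z₂ = {f₁, f₂} := by
    refine (Finset.eq_of_subset_of_card_le ?_ ?_).symm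
    · intro g hg
      rcases Finset.mem_insert.mp hg with h | h
      · rw [h]; exact hf₁
      · rw [Finset.mem_singleton.mp h]; exact hf₂
    · rw [hk₂, Finset.card_pair hne_f]
  have hmem₁ : ∀ g ∈ G.Term Z₁, g = e₁ ∨ g = e₂ := by
    intro g hg; rw [hT₁] at hg; simpa using hg
  have hmem₂ : ∀ g ∈ G.Term Z₂, g = f₁ ∨ g = f₂ := by
    intro g hg; rw [hT₂] at hg; simpa using hg
  have he₁nT₂ : e₁ ∉ G.Term Z₂ := by
    intro h
    rcases (G.mem_Term').mp h with ⟨_, h2⟩ | ⟨h1, _⟩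
    · exact h2 he₁Z₂.2
    · exact h1 he₁Z₂.1
  have he₁TA : e₁ ∈ G.Term (Z₁ ∩ Z₂) := by
    rw [G.mem_Term']
    rcases (G.mem_Term').mp he₁ with ⟨h1, h2⟩ | ⟨h1, h2⟩
    · exact Or.inl ⟨Finset.mem_inter.mpr ⟨h1, he₁Z₂.1⟩, fun hc => h2 (Finset.mem_inter.mp hc).1⟩
    · exact Or.inr ⟨fun hc => h1 (Finset.mem_inter.mp hc).1, Finset.mem_inter.mpr ⟨h2, he₁Z₂.2⟩⟩
  have hf₁TA : f₁ ∈ G.Term (Z₁ ∩ Z₂) := by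
    rw [G.mem_Term']
    rcases (G.mem_Term').mp hf₁ with ⟨h1, h2⟩ | ⟨h1, h2⟩
    · exact Or.inl ⟨Finset.mem_inter.mpr ⟨hf₁Z₁.1, h1⟩, fun hc => h2 (Finset.mem_inter.mp hc).2⟩
    · exact Or.inr ⟨fun hc => h1 (Finset.mem_inter.mp hc).2, Finset.mem_inter.mpr ⟨hf₁Z₁.2, h2⟩⟩
  have hne_ef : e₁ ≠ f₁ := fun h => he₁nT₂ (by rw [h]; exact hf₁)
  have hTA_sub : ∀ g ∈ G.Term (Z₁ ∩ Z₂), g = e₁ ∨ g = f₁ := by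
    intro g hg
    rcases (G.mem_Term').mp hg with ⟨h1, h2⟩ | ⟨h1, h2⟩
    · obtain ⟨h11, h12⟩ := Finset.mem_inter.mp h1
      by_cases hz₁ : (G.ends g).2 ∈ Z₁
      · have hz₂ : (G.ends g).2 ∉ Z₂ := fun hc => h2 (Finset.mem_inter.mpr ⟨hz₁, hc⟩)
        have hgT₂ : g ∈ G.Term Z₂ := (G.mem_Term').mpr (Or.inl ⟨h12, hz₂⟩)
        rcases hmem₂ g hgT₂ with h | h
        · exact Or.inr h
        · rw [h] at h11; exact absurd h11 hf₂Z₁.1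
      · have hgT₁ : g ∈ G.Term Z₁ := (G.mem_Term').mpr (Or.inl ⟨h11, hz₁⟩)
        rcases hmem₁ g hgT₁ with h | h
        · exact Or.inl h
        · rw [h] at h12; exact absurd h12 he₂Z₂.1
    · obtain ⟨h21, h22⟩ := Finset.mem_inter.mp h2
      by_cases hz₁ : (G.ends g).1 ∈ Z₁
      · have hz₂ : (G.ends g).1 ∉ Z₂ := fun hc => h1 (Finset.mem_inter.mpr ⟨hz₁, hc⟩)
        have hgT₂ : g ∈ G.Term Z₂ := (G.mem_Term').mpr (Or.inr ⟨hz₂, h22⟩)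
        rcases hmem₂ g hgT₂ with h | h
        · exact Or.inr h
        · rw [h] at hz₁; exact absurd hz₁ hf₂Z₁.1
      · have hgT₁ : g ∈ G.Term Z₁ := (G.mem_Term').mpr (Or.inr ⟨hz₁, h21⟩)
        rcases hmem₁ g hgT₁ with h | h
        · exact Or.inl h
        · rw [h] at h22; exact absurd h22 he₂Z₂.2
  have hTA : G.Term (Z₁ ∩ Z₂) = {e₁, f₁} := by
    apply Finset.Subset.antisymm
    · intro g hg; rcases hTA_sub g hg with h | h <;> simp [h]
    · intro g hg
      rcases Finset.mem_insert.mp hg with h | h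
      · rw [h]; exact he₁TA
      · rw [Finset.mem_singleton.mp h]; exact hf₁TA
  have hkA : G.k (Z₁ ∩ Z₂) = 2 := by
    show (G.Term (Z₁ ∩ Z₂)).card = 2
    rw [hTA, Finset.card_pair hne_ef]
  have hbA : G.base ∉ Z₁ ∩ Z₂ := fun hc => hb₁ (Finset.mem_inter.mp hc).1
  have hAne : Z₁ ∩ Z₂ ≠ univ := fun h => hbA (by rw [h]; exact mem_univ _)
  have hccA : G.ConnSub (Z₁ ∩ Z₂)ᶜ := by
    rw [Finset.compl_inter]
    exact G.connSub_union hcc₁ hcc₂ (Finset.mem_compl.mpr hb₁) (Finset.mem_compl.mpr hb₂)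
  have hγA : γ ∈ Z₁ ∩ Z₂ := Finset.mem_inter.mpr ⟨hγ₁, hγ₂⟩
  have hcA : G.ConnSub (Z₁ ∩ Z₂) := by
    refine ⟨⟨γ, hγA⟩, ?_⟩
    intro u hu v hv
    by_contra hPv
    set r := fun a b : G.V => a ∈ Z₁ ∩ Z₂ ∧ b ∈ Z₁ ∩ Z₂ ∧ G.Adj a b with hr
    have hrsymm : Symmetric r := fun a b hab => ⟨hab.2.1, hab.1, G.adj_symm' hab.2.2⟩
    have hmemr : ∀ {w x : G.V}, Relation.ReflTransGen r w x → w ∈ Z₁ ∩ Z₂ → x ∈ Z₁ ∩ Z₂ := by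
      intro w x h
      induction h with
      | refl => exact id
      | tail _ hstep _ => exact fun _ => hstep.2.1
    have hQP : ∀ x, Relation.ReflTransGen r v x → ¬ Relation.ReflTransGen r u x :=
      fun x hvx hux => hPv (hux.trans (@Std.Symm.symm _ _ (@Relation.ReflTransGen.stdSymm _ _ ⟨fun _ _ h => hrsymm h⟩) _ _ hvx))
    have huZ₂ : u ∈ Z₂ := (Finset.mem_inter.mp hu).2
    have hvZ₂ : v ∈ Z₂ := (Finset.mem_inter.mp hv).2
    obtain ⟨x₅, y₅, hx₅S, hy₅S, hx₅P, hy₅P, hadj₅⟩ :=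
      G.cross hc₂ (fun x => Relation.ReflTransGen r u x) huZ₂ hvZ₂ Relation.ReflTransGen.refl hPv
    have hx₅A : x₅ ∈ Z₁ ∩ Z₂ := hmemr hx₅P hu
    have hy₅Z₁ : y₅ ∉ Z₁ := by
      intro hc
      exact hy₅P (hx₅P.tail ⟨hx₅A, Finset.mem_inter.mpr ⟨hc, hy₅S⟩, hadj₅⟩)
    obtain ⟨g₅, hg₅T, hg₅ends⟩ := G.term_of_adj hadj₅ (Finset.mem_inter.mp hx₅A).1 hy₅Z₁
    have hg₅Z₂ : (G.ends g₅).1 ∈ Z₂ ∧ (G.ends g₅).2 ∈ Z₂ := G.endpts hg₅ends _ hx₅S hy₅S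
    have hg₅e₁ : g₅ = e₁ := by
      rcases hmem₁ g₅ hg₅T with h | h
      · exact h
      · rw [h] at hg₅Z₂; exact absurd hg₅Z₂.1 he₂Z₂.1
    have hQu : ¬ Relation.ReflTransGen r v u := fun h => hQP u h Relation.ReflTransGen.refl
    obtain ⟨x₈, y₈, hx₈S, hy₈S, hx₈Q, hy₈Q, hadj₈⟩ :=
      G.cross hc₂ (fun x => Relation.ReflTransGen r v x) hvZ₂ huZ₂ Relation.ReflTransGen.refl hQu
    have hx₈A : x₈ ∈ Z₁ ∩ Z₂ := hmemr hx₈Q hv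
    have hy₈Z₁ : y₈ ∉ Z₁ := by
      intro hc
      exact hy₈Q (hx₈Q.tail ⟨hx₈A, Finset.mem_inter.mpr ⟨hc, hy₈S⟩, hadj₈⟩)
    obtain ⟨g₈, hg₈T, hg₈ends⟩ := G.term_of_adj hadj₈ (Finset.mem_inter.mp hx₈A).1 hy₈Z₁
    have hg₈Z₂ : (G.ends g₈).1 ∈ Z₂ ∧ (G.ends g₈).2 ∈ Z₂ := G.endpts hg₈ends _ hx₈S hy₈S
    have hg₈e₁ : g₈ = e₁ := by
      rcases hmem₁ g₈ hg₈T with h | h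
      · exact h
      · rw [h] at hg₈Z₂; exact absurd hg₈Z₂.1 he₂Z₂.1
    have hx₈P : ¬ Relation.ReflTransGen r u x₈ := hQP x₈ hx₈Q
    rw [hg₅e₁] at hg₅ends
    rw [hg₈e₁] at hg₈ends
    have hx₅Z₁ : x₅ ∈ Z₁ := (Finset.mem_inter.mp hx₅A).1
    have hx₈Z₁ : x₈ ∈ Z₁ := (Finset.mem_inter.mp hx₈A).1
    rcases hg₅ends with h5 | h5 <;> rcases hg₈ends with h8 | h8 <;> rw [h5] at h8
    · injection h8 with hx hy
      exact hx₈P (hx ▸ hx₅P)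
    · injection h8 with hx hy
      exact hy₈Z₁ (hx ▸ hx₅Z₁)
    · injection h8 with hx hy
      exact hy₅Z₁ (hx.symm ▸ hx₈Z₁)
    · injection h8 with hx hy
      exact hx₈P (hy ▸ hx₅P)
  have hprevA : G.prec prev (Z₁ ∩ Z₂) := by
    constructor
    · refine Finset.ssubset_iff_subset_ne.mpr ⟨subset_inter hp₁.1.subset hp₂.1.subset, ?_⟩
      intro h
      have h1 : e₁ ∈ G.Term prev := by rw [h]; exact he₁TA
      have hmem : e₁ ∈ G.Term prev ∩ G.Term Z₁ := Finset.mem_inter.mpr ⟨h1, he₁⟩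
      rw [hp₁.2] at hmem
      exact absurd hmem (Finset.notMem_empty _)
    · apply Finset.eq_empty_iff_forall_notMem.mpr
      intro g hg
      obtain ⟨hgp, hgA⟩ := Finset.mem_inter.mp hg
      rcases hTA_sub g hgA with h | h
      · have hmem : g ∈ G.Term prev ∩ G.Term Z₁ :=
          Finset.mem_inter.mpr ⟨hgp, by rw [h]; exact he₁⟩
        rw [hp₁.2] at hmem
        exact absurd hmem (Finset.notMem_empty _)
      · have hmem : g ∈ G.Term prev ∩ G.Term Z₂ :=
          Finset.mem_inter.mpr ⟨hgp, by rw [h]; exact hf₁⟩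
        rw [hp₂.2] at hmem
        exact absurd hmem (Finset.notMem_empty _)
  exact ⟨Z₁ ∩ Z₂,
    ⟨⟨⟨⟨hAne, hcA, hccA⟩, hkA⟩, hγA, Finset.mem_inter.mpr ⟨hγ'₁, hγ'₂⟩, hbA⟩, hprevA⟩,
    Finset.Subset.rfl⟩

end NodalGraph

/-- Lemma 2.5: every 2-tail `Z ⊇ C_γ ∪ C_{γ'}` with
`σ(0) ∈ Zᶜ` contains a `Z`-terminal member of `T²_{γ,γ'}`. -/
theorem exists_Zterminal_two_tail
    (G : NodalGraph) (hconn : G.Connected) (γ γ' : G.V)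
    (M : ℕ) (W : ℕ → Finset G.V) (hN : G.IsNested2 γ γ' M W)
    (Z : Finset G.V) (hZ : G.IsKTail Z 2) (hγ : γ ∈ Z) (hγ' : γ' ∈ Z)
    (hb : G.base ∈ Zᶜ) :
    ∃ t < M, W t ⊆ Z ∧ (G.Term (W t) ∩ G.Term Z).Nonempty := by
  classical
  have hbZ : G.base ∉ Z := Finset.mem_compl.mp hb
  have hcond : G.cond2 γ γ' Z := ⟨hZ, hγ, hγ', hbZ⟩
  have hTe : G.Term (∅ : Finset G.V) = ∅ := by
    apply Finset.eq_empty_iff_forall_notMem.mpr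
    intro e he
    rcases (G.mem_Term').mp he with ⟨h, _⟩ | ⟨_, h⟩ <;> exact absurd h (Finset.notMem_empty _)
  have hprec0 : G.prec ∅ Z :=
    ⟨Finset.empty_ssubset.mpr ⟨γ, hγ⟩, by rw [hTe]; exact Finset.empty_inter _⟩
  have hM : M ≠ 0 := by
    intro h
    exact hN.2 ⟨Z, hcond, by rw [if_pos h]; exact hprec0⟩
  have hex : ∃ t, t < M ∧ ¬ G.prec (W t) Z := by
    refine ⟨M - 1, Nat.sub_lt (Nat.pos_of_ne_zero hM) Nat.one_pos, ?_⟩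
    intro h
    exact hN.2 ⟨Z, hcond, by rw [if_neg hM]; exact h⟩
  obtain ⟨htM, htnp⟩ := Nat.find_spec hex
  have hprevt : G.prec (if Nat.find hex = 0 then ∅ else W (Nat.find hex - 1)) Z := by
    by_cases h0 : Nat.find hex = 0
    · rw [if_pos h0]; exact hprec0
    · rw [if_neg h0]
      have hlt : Nat.find hex - 1 < Nat.find hex :=
        Nat.sub_lt (Nat.pos_of_ne_zero h0) Nat.one_pos
      have hmn := Nat.find_min hex hlt
      push_neg at hmn
      exact hmn (lt_trans hlt htM)
  have hmin := hN.1 (Nat.find hex) htM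
  obtain ⟨Y, ⟨hYc, hYp⟩, hYsub⟩ :=
    G.wedge γ γ' _ (W (Nat.find hex)) Z hmin.prop.1 hcond hmin.prop.2 hprevt
  have hWY : W (Nat.find hex) ⊆ Y :=
    hmin.2 ⟨hYc, hYp⟩ (hYsub.trans Finset.inter_subset_left)
  have hWZ : W (Nat.find hex) ⊆ Z := hWY.trans (hYsub.trans Finset.inter_subset_right)
  refine ⟨Nat.find hex, htM, hWZ, ?_⟩
  by_cases heq : W (Nat.find hex) = Z
  · rw [heq, Finset.inter_self]
    refine Finset.card_pos.mp ?_
    have h2 : (G.Term Z).card = 2 := hZ.2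
    rw [h2]; norm_num
  · have hss : W (Nat.find hex) ⊂ Z := Finset.ssubset_iff_subset_ne.mpr ⟨hWZ, heq⟩
    rw [Finset.nonempty_iff_ne_empty]
    intro h
    exact htnp ⟨hss, h⟩
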